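/- Let B be a finite type, A : Finset B → Finset B → ℝ, and P : Finset B → ℝ. Define N(μ) = Σ_{s ⊇ μ} P(s), the post-collision probabilities P'(s') = Σ_{s} A(s,s')·P(s), and the post-collision means N'(μ) = Σ_{s' ⊇ μ} P'(s'). Then for every μ ∈ Finset B, N'(μ) = Σ_{ν ∈ Finset B} V(μ,ν) · N(ν), where V(μ,ν) = Σ_{s' ∈ Finset B with μ ⊆ s'} Σ_{s ⊆ ν} (−1)^(|ν|−|s|) · A(s, s') are the mean vertex coefficients of A. -/
import Mathlib

lemma kern {B : Type*} [Fintype B] [DecidableEq B] (s t : Finset B) :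
    (∑ ν : Finset B, if s ⊆ ν ∧ ν ⊆ t then (-1:ℝ)^(ν.card - s.card) else 0)
      = if s = t then 1 else 0 := by
  by_cases hst : s ⊆ t
  · rw [← Finset.sum_filter]
    rw [Finset.sum_bij' (i := fun ν _ => ν \ s) (j := fun w _ => s ∪ w)
      (t := (t \ s).powerset) (g := fun w => (-1:ℝ)^w.card)]
    · have hz : (∑ m ∈ (t \ s).powerset, (-1:ℝ) ^ m.card)
          = ((∑ m ∈ (t \ s).powerset, (-1:ℤ) ^ m.card : ℤ) : ℝ) := by
        push_cast; rfl
      rw [hz, Finset.sum_powerset_neg_one_pow_card]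
      by_cases h : s = t
      · simp [h]
      · have hne : t \ s ≠ ∅ := by
          rw [Ne, Finset.sdiff_eq_empty_iff_subset]
          exact fun hts => h (Finset.Subset.antisymm hst hts)
        rw [if_neg h, if_neg hne]
        norm_num
    · intro ν hν
      simp only [Finset.mem_filter, Finset.mem_univ, true_and] at hν
      exact Finset.mem_powerset.mpr (Finset.sdiff_subset_sdiff hν.2 Finset.Subset.rfl)
    · intro w hw
      simp only [Finset.mem_powerset] at hw
      simp only [Finset.mem_filter, Finset.mem_univ, true_and]
      exact ⟨Finset.subset_union_left,
        Finset.union_subset hst (hw.trans (Finset.sdiff_subset))⟩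
    · intro ν hν
      simp only [Finset.mem_filter, Finset.mem_univ, true_and] at hν
      exact Finset.union_sdiff_of_subset hν.1
    · intro w hw
      simp only [Finset.mem_powerset] at hw
      exact Finset.union_sdiff_cancel_left ((Finset.sdiff_disjoint.mono_left hw).symm)
    · intro ν hν
      simp only [Finset.mem_filter, Finset.mem_univ, true_and] at hν
      rw [Finset.card_sdiff_of_subset hν.1]
  · rw [if_neg (by rintro rfl; exact hst Finset.Subset.rfl)]
    refine Finset.sum_eq_zero fun ν _ => if_neg ?_
    rintro ⟨h1, h2⟩
    exact hst (h1.trans h2)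

theorem collision_action_on_means
    (B : Type*) [Fintype B] [DecidableEq B]
    (A : Finset B → Finset B → ℝ) (P : Finset B → ℝ)
    (N : Finset B → ℝ) (hN : ∀ μ, N μ =
      ∑ s ∈ Finset.univ.filter (fun s : Finset B => μ ⊆ s), P s)
    (P' : Finset B → ℝ) (hP' : ∀ s', P' s' = ∑ s : Finset B, A s s' * P s)
    (N' : Finset B → ℝ) (hN' : ∀ μ, N' μ =
      ∑ s' ∈ Finset.univ.filter (fun s' : Finset B => μ ⊆ s'), P' s')
    (V : Finset B → Finset B → ℝ) (hV : ∀ μ ν, V μ ν =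
      ∑ s' ∈ Finset.univ.filter (fun s' : Finset B => μ ⊆ s'),
        ∑ s ∈ ν.powerset, (-1 : ℝ) ^ (ν.card - s.card) * A s s') :
    ∀ μ : Finset B, N' μ = ∑ ν : Finset B, V μ ν * N ν := by
  intro μ
  have hinner : ∀ s' : Finset B,
      (∑ ν : Finset B, (∑ s ∈ ν.powerset, (-1:ℝ)^(ν.card - s.card) * A s s') * N ν)
        = ∑ s : Finset B, A s s' * P s := by
    intro s'
    have hpow : ∀ ν : Finset B, ν.powerset = Finset.univ.filter (· ⊆ ν) := by
      intro ν; ext; simp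
    calc (∑ ν : Finset B, (∑ s ∈ ν.powerset, (-1:ℝ)^(ν.card - s.card) * A s s') * N ν)
        = ∑ ν : Finset B, ∑ s : Finset B, ∑ t : Finset B,
            (if s ⊆ ν ∧ ν ⊆ t then (-1:ℝ)^(ν.card - s.card) else 0) * (A s s' * P t) := by
          refine Finset.sum_congr rfl fun ν _ => ?_
          rw [hpow, hN, Finset.sum_filter, Finset.sum_filter, Finset.sum_mul]
          refine Finset.sum_congr rfl fun s _ => ?_
          rw [Finset.mul_sum]
          refine Finset.sum_congr rfl fun t _ => ?_
          split_ifs <;> simp_all <;> ring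
      _ = ∑ s : Finset B, ∑ t : Finset B,
            (∑ ν : Finset B, if s ⊆ ν ∧ ν ⊆ t then (-1:ℝ)^(ν.card - s.card) else 0) * (A s s' * P t) := by
          rw [Finset.sum_comm]
          refine Finset.sum_congr rfl fun s _ => ?_
          rw [Finset.sum_comm]
          refine Finset.sum_congr rfl fun t _ => ?_
          rw [Finset.sum_mul]
      _ = ∑ s : Finset B, A s s' * P s := by
          refine Finset.sum_congr rfl fun s _ => ?_
          simp only [kern]
          simp [Finset.sum_ite_eq, eq_comm]
  rw [hN']
  simp only [hP']
  have hexp : ∀ ν, V μ ν * N ν = ∑ s' ∈ Finset.univ.filter (fun s' : Finset B => μ ⊆ s'),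
      (∑ s ∈ ν.powerset, (-1:ℝ)^(ν.card - s.card) * A s s') * N ν := fun ν => by
    rw [hV, Finset.sum_mul]
  conv_rhs => rw [Finset.sum_congr rfl (fun ν _ => hexp ν), Finset.sum_comm]
  exact Finset.sum_congr rfl fun s' _ => (hinner s').symm
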